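/- With α and β as in the concrete matched pair example, for nearly all (s,t,g) one has α_g(st) = α_{β_t(g)}(s) · α_g(t): concretely, for g ∈ ℝ and s = (a,b), t = (x,y) ∈ H with all relevant quantities nonzero, α_g(s·t) = α_{β_t(g)}(s) · α_g(t) in H. -/

import Mathlib

/-- Multiplication on H. -/
noncomputable def Hmul (p q : ℝ × ℝ) : ℝ × ℝ := (p.1 * q.1, p.1 * q.2 + p.2 / q.1)

/-- α_x(a,b) = (a+bx, b) if a+bx > 0 and (-(a+bx), -b) if a+bx < 0. -/
noncomputable def alpha (x : ℝ) (p : ℝ × ℝ) : ℝ × ℝ :=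
  if 0 < p.1 + p.2 * x then (p.1 + p.2 * x, p.2) else (-(p.1 + p.2 * x), -p.2)

/-- β_{(a,b)}(x) = x/(a(a+bx)). -/
noncomputable def beta (p : ℝ × ℝ) (x : ℝ) : ℝ := x / (p.1 * (p.1 + p.2 * x))

/-- α_g(st) = α_{β_t(g)}(s) · α_g(t) wherever everything is defined. -/
theorem alpha_matched (g a b x y : ℝ) (ha : 0 < a) (hx : 0 < x)
    (h1 : x + y * g ≠ 0)
    (h2 : a + b * beta (x, y) g ≠ 0)
    (h3 : (Hmul (a, b) (x, y)).1 + (Hmul (a, b) (x, y)).2 * g ≠ 0) :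
    alpha g (Hmul (a, b) (x, y)) = Hmul (alpha (beta (x, y) g) (a, b)) (alpha g (x, y)) := by
  have hx0 : x ≠ 0 := ne_of_gt hx
  simp only [Hmul, beta, alpha] at *
  set X := x + y * g with hX
  set A := a + b * (g / (x * X)) with hA
  have key : a * x + (a * y + b / x) * g = A * X := by
    rw [hA, hX]; field_simp [show x + y * g ≠ 0 from h1]; ring
  have key2 : (a * y + b / x) = A * y + b / X := by
    rw [hA, hX]; field_simp [show x + y * g ≠ 0 from h1]; ring
  simp only [key, ← hX, ← hA]
  rcases h2.lt_or_gt with hAneg | hApos <;> rcases h1.lt_or_gt with hXneg | hXpos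
  · rw [if_pos (mul_pos_of_neg_of_neg hAneg hXneg), if_neg (not_lt.2 hAneg.le),
      if_neg (not_lt.2 hXneg.le)]
    simp only [Prod.mk.injEq]
    constructor
    · ring
    · rw [key2, show -X = -1 * X by ring, div_mul_eq_div_div, show (-1:ℝ) = -(1:ℝ) by norm_num, div_neg, div_one]; ring
  · rw [if_neg (not_lt.2 (mul_nonpos_of_nonpos_of_nonneg hAneg.le hXpos.le)),
      if_neg (not_lt.2 hAneg.le), if_pos hXpos]
    simp only [Prod.mk.injEq]
    constructor
    · ring
    · rw [key2]; ring
  · rw [if_neg (not_lt.2 (mul_nonpos_of_nonneg_of_nonpos hApos.le hXneg.le)),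
      if_pos hApos, if_neg (not_lt.2 hXneg.le)]
    simp only [Prod.mk.injEq]
    constructor
    · ring
    · rw [key2, show -X = -1 * X by ring, div_mul_eq_div_div, show (-1:ℝ) = -(1:ℝ) by norm_num, div_neg, div_one]; ring
  · rw [if_pos (mul_pos hApos hXpos), if_pos hApos, if_pos hXpos]
    simp only [Prod.mk.injEq]
    exact ⟨trivial, key2⟩
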